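/- arXiv:2308.03358 — 2 statements merged into one kernel-verified Lean document; each statement's English description precedes it below -/
import Mathlib

section
/- Let N ≥ 1 and let O be a nonempty finite set. For each o ∈ O let q(o) ∈ ℝ^N be a nonzero vector with 0 ≤ q(o)(a) ≤ Q_max for all coordinates a, let d : O → ℝ be nonnegative weights with Σ_{o∈O} d(o) = 1, and set H = Σ_{o∈O} d(o)·q(o), assumed nonzero. For each o let ε(o) = 1 − ⟪q(o),H⟫/(‖q(o)‖·‖H‖) be the cosine distance between q(o) and H. Then Σ_{o∈O} d(o)·max_a q(o)(a) − max_a H(a) ≤ √(2N) · Q_max · Σ_{o∈O} d(o)·√(ε(o)). -/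
open RealInnerProductSpace

/-- Each coordinate of a Euclidean vector is bounded by its norm. -/
lemma euclid_coord_abs_le_norm {N : ℕ} (x : EuclideanSpace ℝ (Fin N)) (a : Fin N) :
    |x a| ≤ ‖x‖ := by
  rw [EuclideanSpace.norm_eq]
  have h1 : |x a| = Real.sqrt (‖x a‖ ^ 2) := by
    rw [Real.sqrt_sq_eq_abs, abs_norm, Real.norm_eq_abs]
  rw [h1]
  apply Real.sqrt_le_sqrt
  exact Finset.single_le_sum (f := fun i => ‖x i‖ ^ 2)
    (fun i _ => sq_nonneg _) (Finset.mem_univ a)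

/-- Auxiliary algebraic computation for the residual norm. -/
lemma residual_sq_aux (ip nq nH e : ℝ) (hH : 0 < nH)
    (hipval : ip = (1 - e) * (nq * nH)) :
    nq ^ 2 - 2 * (ip / nH ^ 2 * ip) + (ip / nH ^ 2) ^ 2 * nH ^ 2
      = nq ^ 2 - ((1 - e) * nq) ^ 2 := by
  have h1 : ip / nH ^ 2 * ip = ((1 - e) * nq) ^ 2 := by
    rw [hipval]; field_simp
  have h2 : (ip / nH ^ 2) ^ 2 * nH ^ 2 = ((1 - e) * nq) ^ 2 := by
    rw [hipval]; field_simp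
  rw [h1, h2]; ring

theorem per_cluster_gap_single_block (N : ℕ) (hN : 1 ≤ N)
    {O : Type*} [Fintype O] [Nonempty O] (Qmax : ℝ)
    (q : O → EuclideanSpace ℝ (Fin N)) (hq0 : ∀ o, q o ≠ 0)
    (hq : ∀ o a, 0 ≤ q o a ∧ q o a ≤ Qmax)
    (d : O → ℝ) (hd : ∀ o, 0 ≤ d o) (hdsum : ∑ o, d o = 1)
    (H : EuclideanSpace ℝ (Fin N)) (hH : H = ∑ o, d o • q o) (hH0 : H ≠ 0)
    (ε : O → ℝ) (hε : ∀ o, ε o = 1 - ⟪q o, H⟫ / (‖q o‖ * ‖H‖)) :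
    (∑ o, d o * Finset.univ.sup' (Finset.univ_nonempty_iff.mpr ⟨⟨0, hN⟩⟩) (fun a => q o a))
        - Finset.univ.sup' (Finset.univ_nonempty_iff.mpr ⟨⟨0, hN⟩⟩) (fun a => H a)
      ≤ Real.sqrt (2 * N) * Qmax * ∑ o, d o * Real.sqrt (ε o) := by
  have hne : (Finset.univ : Finset (Fin N)).Nonempty := Finset.univ_nonempty_iff.mpr ⟨⟨0, hN⟩⟩
  have hHnorm : (0:ℝ) < ‖H‖ := norm_pos_iff.mpr hH0
  have hqnorm : ∀ o, (0:ℝ) < ‖q o‖ := fun o => norm_pos_iff.mpr (hq0 o)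
  have hQmax : 0 ≤ Qmax := le_trans (hq (Classical.arbitrary O) ⟨0, hN⟩).1
    (hq (Classical.arbitrary O) ⟨0, hN⟩).2
  -- coordinates of H
  have hHcoord : ∀ a, H a = ∑ o, d o * q o a := by
    intro a
    rw [hH, WithLp.ofLp_sum, Finset.sum_apply]
    simp [PiLp.smul_apply, smul_eq_mul]
  have hHpos : ∀ a, 0 ≤ H a := by
    intro a
    rw [hHcoord a]
    exact Finset.sum_nonneg fun o _ => mul_nonneg (hd o) (hq o a).1
  -- inner product of q o with H is nonnegative
  have hip : ∀ o, ⟪q o, H⟫ = ∑ a, q o a * H a := by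
    intro o
    rw [PiLp.inner_apply]
    simp [RCLike.inner_apply, conj_trivial]
    exact Finset.sum_congr rfl fun a _ => mul_comm _ _
  have hipnn : ∀ o, 0 ≤ ⟪q o, H⟫ := by
    intro o
    rw [hip]
    exact Finset.sum_nonneg fun a _ => mul_nonneg (hq o a).1 (hHpos a)
  -- the maximizer of H
  obtain ⟨abar, -, habar⟩ := Finset.exists_mem_eq_sup' hne (fun a => H a)
  have hHle : ∀ a, H a ≤ H abar := by
    intro a
    rw [← habar]
    exact Finset.le_sup' (fun a => H a) (Finset.mem_univ a)
  -- projection coefficient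
  have hcnn : ∀ o, 0 ≤ ⟪q o, H⟫ / ‖H‖ ^ 2 := fun o => div_nonneg (hipnn o) (sq_nonneg _)
  -- per-o bound on the sup of q o
  have hsup : ∀ o, Finset.univ.sup' hne (fun a => q o a)
      ≤ (⟪q o, H⟫ / ‖H‖ ^ 2) * H abar + ‖q o - (⟪q o, H⟫ / ‖H‖ ^ 2) • H‖ := by
    intro o
    apply Finset.sup'_le
    intro a _
    have h2 : (q o - (⟪q o, H⟫ / ‖H‖ ^ 2) • H) a
        = q o a - (⟪q o, H⟫ / ‖H‖ ^ 2) * H a := by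
      simp [PiLp.sub_apply, PiLp.smul_apply, smul_eq_mul]
    have h1 : q o a - (⟪q o, H⟫ / ‖H‖ ^ 2) * H a
        ≤ ‖q o - (⟪q o, H⟫ / ‖H‖ ^ 2) • H‖ := by
      calc q o a - (⟪q o, H⟫ / ‖H‖ ^ 2) * H a
          = (q o - (⟪q o, H⟫ / ‖H‖ ^ 2) • H) a := h2.symm
        _ ≤ |(q o - (⟪q o, H⟫ / ‖H‖ ^ 2) • H) a| := le_abs_self _
        _ ≤ _ := euclid_coord_abs_le_norm _ a
    have h3 : (⟪q o, H⟫ / ‖H‖ ^ 2) * H a ≤ (⟪q o, H⟫ / ‖H‖ ^ 2) * H abar :=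
      mul_le_mul_of_nonneg_left (hHle a) (hcnn o)
    linarith
  -- the weighted inner products sum to ‖H‖²
  have hsumip : ∑ o, d o * ⟪q o, H⟫ = ‖H‖ ^ 2 := by
    calc ∑ o, d o * ⟪q o, H⟫ = ∑ o, ⟪d o • q o, H⟫ :=
          Finset.sum_congr rfl fun o _ => (real_inner_smul_left _ _ _).symm
      _ = ⟪∑ o, d o • q o, H⟫ := (sum_inner _ _ _).symm
      _ = ⟪H, H⟫ := by rw [← hH]
      _ = ‖H‖ ^ 2 := real_inner_self_eq_norm_sq _
  -- bound on the residual norm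
  have hmle : ∀ o, ‖q o - (⟪q o, H⟫ / ‖H‖ ^ 2) • H‖
      ≤ Real.sqrt (2 * N) * Qmax * Real.sqrt (ε o) := by
    intro o
    have hnq := hqnorm o
    have hipval : ⟪q o, H⟫ = (1 - ε o) * (‖q o‖ * ‖H‖) := by
      rw [hε o]
      field_simp
      ring
    have hεnn : 0 ≤ ε o := by
      rw [hε o]
      have hcs : ⟪q o, H⟫ ≤ ‖q o‖ * ‖H‖ := real_inner_le_norm _ _
      have h5 : ⟪q o, H⟫ / (‖q o‖ * ‖H‖) ≤ 1 :=
        (div_le_one (mul_pos hnq hHnorm)).mpr hcs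
      linarith
    -- norm of q o squared bounded by N * Qmax ^ 2
    have hqN : ‖q o‖ ^ 2 ≤ N * Qmax ^ 2 := by
      have h7 : ‖q o‖ ^ 2 = ∑ a, q o a ^ 2 := by
        rw [← real_inner_self_eq_norm_sq, PiLp.inner_apply]
        simp [RCLike.inner_apply, conj_trivial, sq]
      rw [h7]
      calc ∑ a, q o a ^ 2 ≤ ∑ _a : Fin N, Qmax ^ 2 := by
            apply Finset.sum_le_sum
            intro a _
            have h8 := hq o a
            nlinarith [h8.1, h8.2]
        _ = N * Qmax ^ 2 := by
            rw [Finset.sum_const, Finset.card_univ, Fintype.card_fin, nsmul_eq_mul]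
    -- squared residual
    have hm2 : ‖q o - (⟪q o, H⟫ / ‖H‖ ^ 2) • H‖ ^ 2 ≤ 2 * N * Qmax ^ 2 * ε o := by
      have hexp : ‖q o - (⟪q o, H⟫ / ‖H‖ ^ 2) • H‖ ^ 2
          = ‖q o‖ ^ 2 - 2 * ((⟪q o, H⟫ / ‖H‖ ^ 2) * ⟪q o, H⟫)
            + (⟪q o, H⟫ / ‖H‖ ^ 2) ^ 2 * ‖H‖ ^ 2 := by
        rw [norm_sub_sq_real, real_inner_smul_right, norm_smul]
        simp only [Real.norm_eq_abs, mul_pow, sq_abs]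
      rw [hexp, residual_sq_aux (⟪q o, H⟫) (‖q o‖) (‖H‖) (ε o) hHnorm hipval]
      -- ‖q‖² − (1−ε)²‖q‖² = (2ε − ε²)‖q‖² ≤ 2ε‖q‖² ≤ 2εN Qmax²
      nlinarith [sq_nonneg (ε o), hεnn, hqN, sq_nonneg (‖q o‖),
        mul_nonneg hεnn (sq_nonneg (‖q o‖)),
        mul_le_mul_of_nonneg_left hqN hεnn]
    have hrhs : Real.sqrt (2 * N) * Qmax * Real.sqrt (ε o)
        = Real.sqrt (2 * N * Qmax ^ 2 * ε o) := by
      rw [Real.sqrt_mul (by positivity : (0:ℝ) ≤ 2 * N * Qmax ^ 2) (ε o),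
        Real.sqrt_mul (by positivity : (0:ℝ) ≤ 2 * (N:ℝ)) (Qmax ^ 2),
        Real.sqrt_sq hQmax]
    rw [hrhs]
    exact Real.le_sqrt_of_sq_le hm2
  -- the weighted projection parts sum exactly to the max of H
  have hkey : ∑ o, d o * ((⟪q o, H⟫ / ‖H‖ ^ 2) * H abar) = H abar := by
    have h10 : ∀ o ∈ Finset.univ, d o * ((⟪q o, H⟫ / ‖H‖ ^ 2) * H abar)
        = (d o * ⟪q o, H⟫) * (H abar / ‖H‖ ^ 2) := fun o _ => by ring
    rw [Finset.sum_congr rfl h10, ← Finset.sum_mul, hsumip]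
    field_simp
  -- assemble
  rw [habar]
  have hmain : ∑ o, d o * Finset.univ.sup' hne (fun a => q o a)
      ≤ H abar + ∑ o, d o * (Real.sqrt (2 * N) * Qmax * Real.sqrt (ε o)) := by
    calc ∑ o, d o * Finset.univ.sup' hne (fun a => q o a)
        ≤ ∑ o, (d o * ((⟪q o, H⟫ / ‖H‖ ^ 2) * H abar)
            + d o * (Real.sqrt (2 * N) * Qmax * Real.sqrt (ε o))) := by
          apply Finset.sum_le_sum
          intro o _
          have h11 : Finset.univ.sup' hne (fun a => q o a)
              ≤ (⟪q o, H⟫ / ‖H‖ ^ 2) * H abar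
                + Real.sqrt (2 * N) * Qmax * Real.sqrt (ε o) :=
            le_trans (hsup o) (by linarith [hmle o])
          calc d o * Finset.univ.sup' hne (fun a => q o a)
              ≤ d o * ((⟪q o, H⟫ / ‖H‖ ^ 2) * H abar
                + Real.sqrt (2 * N) * Qmax * Real.sqrt (ε o)) :=
                mul_le_mul_of_nonneg_left h11 (hd o)
            _ = _ := by ring
      _ = H abar + ∑ o, d o * (Real.sqrt (2 * N) * Qmax * Real.sqrt (ε o)) := by
          rw [Finset.sum_add_distrib, hkey]
  have hfin : ∑ o, d o * (Real.sqrt (2 * N) * Qmax * Real.sqrt (ε o))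
      = Real.sqrt (2 * N) * Qmax * ∑ o, d o * Real.sqrt (ε o) := by
    rw [Finset.mul_sum]
    exact Finset.sum_congr rfl fun o _ => by ring
  linarith [hmain, hfin.le, hfin.ge]
end

section
/- Let B and A be nonempty finite sets, and define Φ_max(x) = Σ_{b∈B} max_{a∈A} x(b,a) for x : B × A → ℝ. Let O be a nonempty finite set; for each o ∈ O let q(o) : B × A → ℝ be a nonzero vector with 0 ≤ q(o)(b,a) ≤ Q_max for all (b,a), let d : O → ℝ be nonnegative weights with Σ_{o∈O} d(o) = 1, and set H = Σ_{o∈O} d(o)·q(o), assumed nonzero. For each o let ε(o) = 1 − ⟪q(o),H⟫/(‖q(o)‖₂·‖H‖₂) be the cosine distance in ℝ^{B×A}, and let ε̄ = Σ_{o∈O} d(o)·ε(o) be the average cosine distance. Then Σ_{o∈O} d(o)·Φ_max(q(o)) − Φ_max(H) ≤ |B|·√(2|A|) · Q_max · √(ε̄). -/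
open RealInnerProductSpace

/-- The maximization functional `Φ_max(x) = Σ_{b ∈ B} max_{a ∈ A} x (b, a)`. -/
noncomputable def PhiMax {B A : Type*} [Fintype B] [Fintype A] [Nonempty A]
    (x : B × A → ℝ) : ℝ :=
  ∑ b, Finset.univ.sup' Finset.univ_nonempty fun a => x (b, a)

lemma euclid_sum_apply {B A O : Type*} [Fintype B] [Fintype A] [Fintype O] (d : O → ℝ)
    (q : O → EuclideanSpace ℝ (B × A)) (i : B × A) :
    (∑ o, d o • q o) i = ∑ o, d o * q o i := by
  induction (Finset.univ : Finset O) using Finset.cons_induction with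
  | empty => simp
  | cons o s ho ih => rw [Finset.sum_cons, Finset.sum_cons, ← ih]; rfl

lemma euclid_norm_sq {B A : Type*} [Fintype B] [Fintype A]
    (x : EuclideanSpace ℝ (B × A)) : ‖x‖ ^ 2 = ∑ i, x i ^ 2 := by
  rw [EuclideanSpace.norm_eq, Real.sq_sqrt (by positivity)]
  simp [sq_abs]

/-- Key per-vector lemma: for a nonneg-entry `H` and any `c ≥ 0`,
`Φmax x − c Φmax H ≤ √|B| ‖x − c•H‖`. -/
lemma phiMax_sub_le {B A : Type*} [Fintype B] [Fintype A] [Nonempty B] [Nonempty A]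
    (x H : EuclideanSpace ℝ (B × A)) (c : ℝ) (hc : 0 ≤ c) :
    PhiMax x - c * PhiMax H ≤ Real.sqrt (Fintype.card B) * ‖x - c • H‖ := by
  classical
  -- selection of argmax of x per row
  have hsel : ∀ b : B, ∃ a : A, (Finset.univ.sup' Finset.univ_nonempty fun a => x (b, a))
      = x (b, a) := by
    intro b
    obtain ⟨a, -, ha⟩ := Finset.exists_mem_eq_sup' (Finset.univ_nonempty (α := A))
      (fun a => x (b, a))
    exact ⟨a, ha⟩
  choose sel hsel using hsel
  set y : EuclideanSpace ℝ (B × A) := x - c • H with hy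
  have hyapp : ∀ i : B × A, y i = x i - c * H i := fun i => rfl
  have step1 : PhiMax x - c * PhiMax H ≤ ∑ b, y (b, sel b) := by
    rw [PhiMax, PhiMax, Finset.mul_sum, ← Finset.sum_sub_distrib]
    apply Finset.sum_le_sum
    intro b _
    rw [hsel b, hyapp]
    have : H (b, sel b) ≤ Finset.univ.sup' Finset.univ_nonempty fun a => H (b, a) :=
      Finset.le_sup' (f := fun a => H (b, a)) (Finset.mem_univ (sel b))
    nlinarith
  have step2 : ∑ b, y (b, sel b) ≤ Real.sqrt (Fintype.card B) * ‖y‖ := by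
    have h1 : ∑ b, y (b, sel b) ≤ ∑ b, |y (b, sel b)| :=
      Finset.sum_le_sum fun b _ => le_abs_self _
    have h2 : (∑ b, |y (b, sel b)|) ^ 2 ≤ (Fintype.card B : ℝ) * ∑ b, y (b, sel b) ^ 2 := by
      have := Finset.sum_mul_sq_le_sq_mul_sq Finset.univ (fun _ : B => (1 : ℝ))
        (fun b => |y (b, sel b)|)
      simpa [sq_abs] using this
    have h3 : ∑ b, y (b, sel b) ^ 2 ≤ ‖y‖ ^ 2 := by
      rw [euclid_norm_sq, Fintype.sum_prod_type]
      apply Finset.sum_le_sum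
      intro b _
      exact Finset.single_le_sum (f := fun a => y (b, a) ^ 2)
        (fun a _ => sq_nonneg _) (Finset.mem_univ (sel b))
    calc ∑ b, y (b, sel b) ≤ ∑ b, |y (b, sel b)| := h1
      _ = Real.sqrt ((∑ b, |y (b, sel b)|) ^ 2) := by
          rw [Real.sqrt_sq (Finset.sum_nonneg fun b _ => abs_nonneg _)]
      _ ≤ Real.sqrt ((Fintype.card B : ℝ) * ‖y‖ ^ 2) := by
          apply Real.sqrt_le_sqrt
          calc (∑ b, |y (b, sel b)|) ^ 2 ≤ (Fintype.card B : ℝ) * ∑ b, y (b, sel b) ^ 2 := h2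
            _ ≤ (Fintype.card B : ℝ) * ‖y‖ ^ 2 := by
                apply mul_le_mul_of_nonneg_left h3 (by positivity)
      _ = Real.sqrt (Fintype.card B) * ‖y‖ := by
          rw [Real.sqrt_mul (by positivity), Real.sqrt_sq (norm_nonneg _)]
  exact step1.trans step2

theorem per_cluster_return_gap {B A : Type*} [Fintype B] [Fintype A]
    [Nonempty B] [Nonempty A] {O : Type*} [Fintype O] [Nonempty O] (Qmax : ℝ)
    (q : O → EuclideanSpace ℝ (B × A)) (hq0 : ∀ o, q o ≠ 0)
    (hq : ∀ o ba, 0 ≤ q o ba ∧ q o ba ≤ Qmax)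
    (d : O → ℝ) (hd : ∀ o, 0 ≤ d o) (hdsum : ∑ o, d o = 1)
    (H : EuclideanSpace ℝ (B × A)) (hH : H = ∑ o, d o • q o) (hH0 : H ≠ 0)
    (ε : O → ℝ) (hε : ∀ o, ε o = 1 - ⟪q o, H⟫ / (‖q o‖ * ‖H‖))
    (εbar : ℝ) (hεbar : εbar = ∑ o, d o * ε o) :
    (∑ o, d o * PhiMax (q o)) - PhiMax H
      ≤ (Fintype.card B : ℝ) * Real.sqrt (2 * Fintype.card A) * Qmax * Real.sqrt εbar := by
  classical
  have hQ : 0 ≤ Qmax := le_trans (hq (Classical.arbitrary O) (Classical.arbitrary (B × A))).1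
    (hq _ _).2
  have hqn : ∀ o, 0 < ‖q o‖ := fun o => norm_pos_iff.mpr (hq0 o)
  have hHn : 0 < ‖H‖ := norm_pos_iff.mpr hH0
  have hHnn : ∀ i, 0 ≤ H i := by
    intro i
    rw [hH, euclid_sum_apply]
    exact Finset.sum_nonneg fun o _ => mul_nonneg (hd o) (hq o i).1
  have hinner_eq : ∀ (x y : EuclideanSpace ℝ (B × A)), ⟪x, y⟫ = ∑ i, x i * y i := by
    intro x y
    simp [PiLp.inner_apply, RCLike.inner_apply, starRingEnd_apply]
    exact Finset.sum_congr rfl fun i _ => mul_comm _ _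
  have hinn_nn : ∀ o, 0 ≤ ⟪q o, H⟫ := by
    intro o
    rw [hinner_eq]
    exact Finset.sum_nonneg fun i _ => mul_nonneg (hq o i).1 (hHnn i)
  have hε0 : ∀ o, 0 ≤ ε o := by
    intro o
    rw [hε o, sub_nonneg]
    exact div_le_one_of_le₀ (real_inner_le_norm _ _) (by positivity)
  -- the inner product in terms of ε
  have hinn : ∀ o, ⟪q o, H⟫ = (1 - ε o) * (‖q o‖ * ‖H‖) := by
    intro o
    have h : ⟪q o, H⟫ / (‖q o‖ * ‖H‖) = 1 - ε o := by rw [hε o]; ring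
    rw [div_eq_iff (mul_pos (hqn o) hHn).ne'] at h
    linarith
  set c : O → ℝ := fun o => ⟪q o, H⟫ / ‖H‖ ^ 2 with hcdef
  have hc_nn : ∀ o, 0 ≤ c o := fun o => div_nonneg (hinn_nn o) (by positivity)
  have hcsum : ∑ o, d o * c o = 1 := by
    have e1 : ∑ o, d o * ⟪q o, H⟫ = ‖H‖ ^ 2 := by
      have e2 : ⟪(∑ o, d o • q o : EuclideanSpace ℝ (B × A)), H⟫ = ∑ o, d o * ⟪q o, H⟫ := by
        rw [sum_inner]
        exact Finset.sum_congr rfl fun o _ => real_inner_smul_left _ _ _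
      rw [← hH, real_inner_self_eq_norm_sq] at e2
      linarith
    simp only [hcdef]
    rw [show (∑ o, d o * (⟪q o, H⟫ / ‖H‖ ^ 2)) = (∑ o, d o * ⟪q o, H⟫) / ‖H‖ ^ 2 from by
      rw [Finset.sum_div]; exact Finset.sum_congr rfl fun o _ => (mul_div_assoc _ _ _).symm]
    rw [e1, div_self (by positivity)]
  set K : ℝ := Qmax * Real.sqrt ((Fintype.card B : ℝ) * (Fintype.card A : ℝ)) with hKdef
  have hK : 0 ≤ K := by positivity
  have hnormq : ∀ o, ‖q o‖ ≤ K := by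
    intro o
    have h1 : ‖q o‖ ^ 2 ≤ ((Fintype.card B : ℝ) * (Fintype.card A : ℝ)) * Qmax ^ 2 := by
      rw [euclid_norm_sq]
      calc ∑ i, q o i ^ 2 ≤ ∑ _i : B × A, Qmax ^ 2 :=
            Finset.sum_le_sum fun i _ => by
              have := (hq o i).1; have := (hq o i).2; nlinarith
        _ = ((Fintype.card B : ℝ) * (Fintype.card A : ℝ)) * Qmax ^ 2 := by
            simp [Fintype.card_prod]
    calc ‖q o‖ = Real.sqrt (‖q o‖ ^ 2) := (Real.sqrt_sq (norm_nonneg _)).symm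
      _ ≤ Real.sqrt (((Fintype.card B : ℝ) * (Fintype.card A : ℝ)) * Qmax ^ 2) :=
          Real.sqrt_le_sqrt h1
      _ = K := by
          rw [Real.sqrt_mul (by positivity), Real.sqrt_sq hQ, hKdef]; ring
  have hres : ∀ o, ‖q o - c o • H‖ ≤ Real.sqrt (2 * ε o) * K := by
    intro o
    have hcval : c o = (1 - ε o) * ‖q o‖ / ‖H‖ := by
      simp only [hcdef]
      rw [hinn o]
      field_simp
    have hsq : ‖q o - c o • H‖ ^ 2 ≤ 2 * ε o * ‖q o‖ ^ 2 := by
      rw [norm_sub_sq_real, real_inner_smul_right, norm_smul, hinn o, hcval]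
      rw [mul_pow, Real.norm_eq_abs, sq_abs]
      have hH' : ‖H‖ ≠ 0 := hHn.ne'
      have e : ((1 - ε o) * ‖q o‖ / ‖H‖) ^ 2 * ‖H‖ ^ 2 = (1 - ε o) ^ 2 * ‖q o‖ ^ 2 := by
        field_simp
      rw [e]
      have e2 : 2 * ((1 - ε o) * ‖q o‖ / ‖H‖ * ((1 - ε o) * (‖q o‖ * ‖H‖)))
          = 2 * (1 - ε o) ^ 2 * ‖q o‖ ^ 2 := by
        field_simp
      rw [e2]
      nlinarith [hε0 o, sq_nonneg (‖q o‖), sq_nonneg (ε o)]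
    have hnn : (0:ℝ) ≤ 2 * ε o := by have := hε0 o; linarith
    calc ‖q o - c o • H‖ = Real.sqrt (‖q o - c o • H‖ ^ 2) :=
          (Real.sqrt_sq (norm_nonneg _)).symm
      _ ≤ Real.sqrt (2 * ε o * K ^ 2) := by
          apply Real.sqrt_le_sqrt
          have h2 : ‖q o‖ ^ 2 ≤ K ^ 2 := by nlinarith [hnormq o, norm_nonneg (q o)]
          nlinarith
      _ = Real.sqrt (2 * ε o) * K := by
          rw [Real.sqrt_mul hnn, Real.sqrt_sq hK]
  have hsum_sqrt : ∑ o, d o * Real.sqrt (ε o) ≤ Real.sqrt εbar := by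
    have h := Finset.sum_sq_le_sum_mul_sum_of_sq_eq_mul Finset.univ
      (r := fun o => d o * Real.sqrt (ε o)) (f := d) (g := fun o => d o * ε o)
      (fun o _ => hd o) (fun o _ => mul_nonneg (hd o) (hε0 o))
      (fun o _ => by rw [mul_pow, Real.sq_sqrt (hε0 o)]; ring)
    rw [hdsum, one_mul, ← hεbar] at h
    have hnn : (0:ℝ) ≤ ∑ o, d o * Real.sqrt (ε o) :=
      Finset.sum_nonneg fun o _ => mul_nonneg (hd o) (Real.sqrt_nonneg _)
    calc ∑ o, d o * Real.sqrt (ε o) = Real.sqrt ((∑ o, d o * Real.sqrt (ε o)) ^ 2) :=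
          (Real.sqrt_sq hnn).symm
      _ ≤ Real.sqrt εbar := Real.sqrt_le_sqrt h
  have main : (∑ o, d o * PhiMax (q o)) - PhiMax H
      ≤ (Real.sqrt (Fintype.card B) * K * Real.sqrt 2) * ∑ o, d o * Real.sqrt (ε o) := by
    have e0 : (∑ o, d o * PhiMax (q o)) - PhiMax H
        = ∑ o, d o * (PhiMax (q o) - c o * PhiMax H) := by
      rw [show ∑ o, d o * (PhiMax (q o) - c o * PhiMax H)
          = (∑ o, d o * PhiMax (q o)) - (∑ o, d o * c o) * PhiMax H from by
        rw [Finset.sum_mul, ← Finset.sum_sub_distrib]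
        exact Finset.sum_congr rfl fun o _ => by ring]
      rw [hcsum, one_mul]
    rw [e0]
    calc ∑ o, d o * (PhiMax (q o) - c o * PhiMax H)
        ≤ ∑ o, d o * (Real.sqrt (Fintype.card B) * (Real.sqrt (2 * ε o) * K)) := by
          apply Finset.sum_le_sum
          intro o _
          apply mul_le_mul_of_nonneg_left _ (hd o)
          calc PhiMax (q o) - c o * PhiMax H
              ≤ Real.sqrt (Fintype.card B) * ‖q o - c o • H‖ :=
                phiMax_sub_le (q o) H (c o) (hc_nn o)
            _ ≤ Real.sqrt (Fintype.card B) * (Real.sqrt (2 * ε o) * K) := by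
                apply mul_le_mul_of_nonneg_left (hres o) (Real.sqrt_nonneg _)
      _ = (Real.sqrt (Fintype.card B) * K * Real.sqrt 2) * ∑ o, d o * Real.sqrt (ε o) := by
          rw [Finset.mul_sum]
          apply Finset.sum_congr rfl
          intro o _
          rw [Real.sqrt_mul (by norm_num : (0:ℝ) ≤ 2)]
          ring
  have hconst : Real.sqrt (Fintype.card B) * K * Real.sqrt 2
      = (Fintype.card B : ℝ) * Real.sqrt (2 * Fintype.card A) * Qmax := by
    rw [hKdef]
    rw [show Real.sqrt (Fintype.card B) * (Qmax * Real.sqrt ((Fintype.card B : ℝ) * (Fintype.card A : ℝ))) * Real.sqrt 2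
        = Qmax * (Real.sqrt (Fintype.card B) * Real.sqrt ((Fintype.card B : ℝ) * (Fintype.card A : ℝ)) * Real.sqrt 2) from by ring]
    rw [← Real.sqrt_mul (by positivity), ← Real.sqrt_mul (by positivity)]
    rw [show ((Fintype.card B : ℝ)) * ((Fintype.card B : ℝ) * (Fintype.card A : ℝ)) * 2
        = ((Fintype.card B : ℝ)) ^ 2 * (2 * (Fintype.card A : ℝ)) from by ring]
    rw [Real.sqrt_mul (by positivity), Real.sqrt_sq (by positivity)]
    ring
  calc (∑ o, d o * PhiMax (q o)) - PhiMax H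
      ≤ (Real.sqrt (Fintype.card B) * K * Real.sqrt 2) * ∑ o, d o * Real.sqrt (ε o) := main
    _ ≤ (Real.sqrt (Fintype.card B) * K * Real.sqrt 2) * Real.sqrt εbar := by
        apply mul_le_mul_of_nonneg_left hsum_sqrt (by positivity)
    _ = (Fintype.card B : ℝ) * Real.sqrt (2 * Fintype.card A) * Qmax * Real.sqrt εbar := by
        rw [hconst]
end
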